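/- arXiv:0808.3486 — 4 statements merged into one kernel-verified Lean document; each statement's English description precedes it below -/
import Mathlib

section
/- Euler's pentagonal-type identity for the Dedekind eta function: exp(πiτ/12)·∏_{k=1}^∞ (1 - exp(2kπiτ)) = exp(πiτ/12)·Σ_{k∈ℤ} (-1)^k exp((3k²+k)πiτ), i.e., ∏_{k=1}^∞ (1 - q^{2k}) = Σ_{k∈ℤ} (-1)^k q^{3k²+k} with q = exp(πiτ), for all τ in the upper half-plane. -/
open Complex Real

open Finset Filter Topology

private lemma shanks' (y : ℂ) (n : ℕ) :
    ∑ j ∈ range (n+1), (-1:ℂ)^j * y^(2*n*j + j*(j+1)) * ∏ k ∈ Ico (j+1) (n+1), (1 - y^(2*k))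
    = (∑ j ∈ range (n+1), (-1:ℂ)^j * y^(3*j*j + j))
      + ∑ j ∈ range n, (-1:ℂ)^(j+1) * y^(3*j*j + 5*j + 2) := by
  induction n with
  | zero => simp
  | succ n ih =>
    set c : ℂ := y^(2*(n+1)) with hc
    set A : ℕ → ℂ := fun j => (-1:ℂ)^j * y^(2*(n+1)*j + j*(j+1)) *
        ∏ k ∈ Ico (j+1) (n+1), (1 - y^(2*k)) with hA
    set t : ℕ → ℂ := fun j => (-1:ℂ)^j * y^(2*n*j + j*(j+1)) *
        ∏ k ∈ Ico (j+1) (n+1), (1 - y^(2*k)) with ht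
    have key : ∀ j ∈ range n, A (j+1) - A j * c = t (j+1) := by
      intro j hj
      simp only [mem_range] at hj
      simp only [hA, ht]
      rw [Finset.prod_eq_prod_Ico_succ_bot (by omega : j+1 < n+1)]
      rw [show 2*(n+1)*(j+1) + (j+1)*((j+1)+1)
            = (2*(n+1)*j + j*(j+1) + 2*(n+1)) + 2*(j+1) by ring,
          show 2*n*(j+1) + (j+1)*((j+1)+1) = 2*(n+1)*j + j*(j+1) + 2*(n+1) by ring,
          pow_add, hc, pow_add, pow_succ]
      ring
    have e1 : ∑ j ∈ range (n+1+1), (-1:ℂ)^j * y^(2*(n+1)*j + j*(j+1)) *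
          ∏ k ∈ Ico (j+1) (n+1+1), (1 - y^(2*k))
        = (∑ j ∈ range (n+1), (A j - A j * c)) + (-1:ℂ)^(n+1) * y^((n+1)*(3*n+4)) := by
      rw [Finset.sum_range_succ]
      congr 1
      · refine Finset.sum_congr rfl (fun j hj => ?_)
        simp only [mem_range] at hj
        rw [Finset.prod_Ico_succ_top (by omega : j+1 ≤ n+1), hA]
        simp only [hc]
        ring
      · rw [Finset.Ico_self, Finset.prod_empty,
          show 2*(n+1)*(n+1) + (n+1)*((n+1)+1) = (n+1)*(3*n+4) by ring]
        ring
    have e2 : (∑ j ∈ range (n+1), (A j - A j * c))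
        = (∑ j ∈ range (n+1), t j) + (-1:ℂ)^(n+1) * y^((n+1)*(3*n+2)) := by
      rw [Finset.sum_sub_distrib, Finset.sum_range_succ' A, Finset.sum_range_succ (fun j => A j * c),
        Finset.sum_range_succ' t]
      have hAn : A n * c = (-1:ℂ)^n * y^((n+1)*(3*n+2)) := by
        simp only [hA, hc, Finset.Ico_self, Finset.prod_empty, mul_one]
        rw [mul_assoc, ← pow_add, show 2*(n+1)*n + n*(n+1) + 2*(n+1) = (n+1)*(3*n+2) by ring]
      have hA0 : A 0 = t 0 := by simp [hA, ht]
      have hk : (∑ k ∈ range n, A (k+1)) - ∑ x ∈ range n, A x * c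
          = ∑ k ∈ range n, t (k+1) := by
        rw [← Finset.sum_sub_distrib]; exact Finset.sum_congr rfl key
      rw [hAn]
      linear_combination hk
    rw [e1, e2, ih]
    simp only [Finset.sum_range_succ]
    rw [show (n+1)*(3*n+2) = 3*n*n+5*n+2 by ring,
      show (n+1)*(3*n+4) = 3*(n+1)*(n+1)+(n+1) by ring]
    ring

/-- Euler's pentagonal-type identity for the Dedekind eta function:
`e^{πiτ/12} ∏_{k≥1} (1 - e^{2kπiτ}) = e^{πiτ/12} Σ_{k∈ℤ} (-1)^k e^{(3k²+k)πiτ}`. -/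
theorem euler_pentagonal_eta (τ : ℂ) (hτ : 0 < τ.im) :
    Complex.exp ((π : ℂ) * I * τ / 12) *
        ∏' k : ℕ, (1 - Complex.exp (2 * ((k : ℂ) + 1) * (π : ℂ) * I * τ)) =
      Complex.exp ((π : ℂ) * I * τ / 12) *
        ∑' k : ℤ, (-1 : ℂ) ^ k * Complex.exp ((3 * (k : ℂ) ^ 2 + (k : ℂ)) * (π : ℂ) * I * τ) := by
  congr 1
  set y : ℂ := Complex.exp ((π:ℂ) * I * τ) with hy
  have hyne : y ≠ 0 := Complex.exp_ne_zero _
  set r : ℝ := ‖y‖ with hrdef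
  have hr0 : (0:ℝ) ≤ r := norm_nonneg _
  have hr1 : r < 1 := by
    rw [hrdef, hy, Complex.norm_exp, Real.exp_lt_one_iff]
    simp only [Complex.mul_re, Complex.mul_im, Complex.I_re, Complex.I_im,
      Complex.ofReal_re, Complex.ofReal_im]
    nlinarith [Real.pi_pos]
  have hr2 : r^2 < 1 := by nlinarith
  have hr20 : (0:ℝ) ≤ r^2 := by positivity
  -- the product factors
  set f : ℕ → ℂ := fun k => 1 - y^(2*(k+1)) with hfdef
  have hf_eq : ∀ k : ℕ, 1 - Complex.exp (2*((k:ℂ)+1)*(π:ℂ)*I*τ) = f k := by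
    intro k
    have h1 : 2*((k:ℂ)+1)*(π:ℂ)*I*τ = ((2*(k+1) : ℕ) : ℂ) * ((π:ℂ)*I*τ) := by
      push_cast; ring
    rw [hfdef, h1, Complex.exp_nat_mul, ← hy]
  have hnormpow : ∀ m : ℕ, ‖y^m‖ = r^m := fun m => by rw [norm_pow, hrdef]
  have hfne : ∀ k : ℕ, f k ≠ 0 := by
    intro k h
    have h2 : y^(2*(k+1)) = 1 := by
      have : (1:ℂ) - y^(2*(k+1)) = 0 := h
      have := sub_eq_zero.mp this
      exact this.symm
    have h3 : ‖y^(2*(k+1))‖ < 1 := by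
      rw [hnormpow]; exact pow_lt_one₀ hr0 hr1 (by omega)
    rw [h2] at h3; simp at h3
  -- summability of logs
  have hgeo : Summable (fun k : ℕ => r^(2*(k+1))) := by
    have : Summable (fun k : ℕ => (r^2)^(k+1)) :=
      (summable_nat_add_iff 1).mpr (summable_geometric_of_lt_one hr20 hr2)
    exact this.congr (fun k => by rw [← pow_mul])
  have htend0 : Tendsto (fun k : ℕ => r^(2*(k+1))) atTop (𝓝 0) := by
    have : Tendsto (fun k : ℕ => (r^2)^(k+1)) atTop (𝓝 0) :=
      (tendsto_pow_atTop_nhds_zero_of_lt_one hr20 hr2).comp (tendsto_add_atTop_nat 1)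
    exact this.congr (fun k => by rw [← pow_mul])
  have hlog : Summable (fun k : ℕ => Complex.log (f k)) := by
    apply Summable.of_norm_bounded_eventually (g := fun k => 3/2 * r^(2*(k+1))) (hgeo.mul_left _)
    rw [Nat.cofinite_eq_atTop]
    filter_upwards [htend0.eventually_lt_const (by norm_num : (0:ℝ) < 1/2)] with k hk
    have h1 : ‖-(y^(2*(k+1)))‖ ≤ 1/2 := by rw [norm_neg, hnormpow]; exact hk.le
    have := Complex.norm_log_one_add_half_le_self h1
    rw [← sub_eq_add_neg] at this
    rw [hfdef]
    refine this.trans ?_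
    rw [norm_neg, hnormpow]
  have hmult : Multipliable f :=
    Complex.multipliable_of_summable_log hlog
  have hP : Tendsto (fun n => ∏ k ∈ range n, f k) atTop (𝓝 (∏' k, f k)) :=
    hmult.hasProd.tendsto_prod_nat
  -- the sum side
  set g : ℤ → ℂ := fun k =>
    (-1 : ℂ) ^ k * Complex.exp ((3 * (k : ℂ) ^ 2 + (k : ℂ)) * (π : ℂ) * I * τ) with hgdef
  have hg : ∀ k : ℤ, g k = (-1:ℂ)^k * y^(3*k^2+k) := by
    intro k
    show (-1:ℂ)^k * Complex.exp ((3*(k:ℂ)^2 + (k:ℂ)) * (π:ℂ) * I * τ) = _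
    have h1 : (3*(k:ℂ)^2 + (k:ℂ)) * (π:ℂ) * I * τ = ((3*k^2+k : ℤ) : ℂ) * ((π:ℂ)*I*τ) := by
      push_cast; ring
    rw [h1, Complex.exp_int_mul, ← hy]
  have hgnat : ∀ n : ℕ, g (n:ℤ) = (-1:ℂ)^n * y^(3*n*n+n) := by
    intro n
    rw [hg, show (3*(n:ℤ)^2 + (n:ℤ)) = ((3*n*n+n : ℕ) : ℤ) by push_cast; ring,
      zpow_natCast, zpow_natCast]
  have hgneg : ∀ n : ℕ, g (-(n:ℤ)) = (-1:ℂ)^n * y^(3*n*n-n) := by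
    intro n
    have hle : n ≤ 3*n*n := by
      rcases n with _|m
      · simp
      · nlinarith
    rw [hg, show (3*(-(n:ℤ))^2 + (-(n:ℤ))) = ((3*n*n-n : ℕ) : ℤ) by
        push_cast [hle]; ring, zpow_natCast]
    congr 1
    rw [zpow_neg, zpow_natCast, ← inv_pow]
    norm_num
  have hgsum : Summable g := by
    apply Summable.of_nat_of_neg
    · apply Summable.of_norm_bounded (summable_geometric_of_lt_one hr0 hr1)
      intro n
      rw [hgnat, norm_mul, norm_pow, norm_neg, norm_one, one_pow, one_mul, hnormpow]
      exact pow_le_pow_of_le_one hr0 hr1.le (Nat.le_add_left _ _)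
    · apply Summable.of_norm_bounded (summable_geometric_of_lt_one hr0 hr1)
      intro n
      rw [hgneg, norm_mul, norm_pow, norm_neg, norm_one, one_pow, one_mul, hnormpow]
      refine pow_le_pow_of_le_one hr0 hr1.le ?_
      have : 2*n ≤ 3*n*n := by
        rcases n with _|m
        · simp
        · nlinarith
      omega
  have hS : Tendsto (fun n : ℕ => ∑ k ∈ Finset.Icc (-(n:ℤ)) (n:ℤ), g k) atTop
      (𝓝 (∑' k, g k)) := by
    refine hgsum.hasSum.comp (tendsto_atTop_finset_of_monotone ?_ ?_)
    · intro a b hab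
      apply Finset.Icc_subset_Icc <;> simp <;> exact_mod_cast hab
    · intro x
      exact ⟨x.natAbs, by rw [Finset.mem_Icc]; omega⟩
  have hIcc : ∀ n : ℕ, ∑ k ∈ Finset.Icc (-(n:ℤ)) (n:ℤ), g k
      = (∑ j ∈ range (n+1), (-1:ℂ)^j * y^(3*j*j + j))
        + ∑ j ∈ range n, (-1:ℂ)^(j+1) * y^(3*j*j + 5*j + 2) := by
    intro n
    induction n with
    | zero =>
      simp only [Nat.cast_zero, neg_zero, Finset.Icc_self, Finset.sum_singleton]
      have := hgnat 0
      norm_num at this ⊢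
      rw [this]
    | succ n ih =>
      have hsplit : Finset.Icc (-((n+1:ℕ):ℤ)) ((n+1:ℕ):ℤ)
          = insert (-((n+1:ℕ):ℤ)) (insert ((n+1:ℕ):ℤ) (Finset.Icc (-(n:ℕ):ℤ) (n:ℕ))) := by
        ext k
        simp only [Finset.mem_Icc, Finset.mem_insert]
        push_cast
        omega
      have hR1 : ∑ j ∈ range (n+1+1), (-1:ℂ)^j * y^(3*j*j+j)
          = (∑ j ∈ range (n+1), (-1:ℂ)^j * y^(3*j*j+j))
            + (-1:ℂ)^(n+1) * y^(3*(n+1)*(n+1)+(n+1)) :=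
        Finset.sum_range_succ _ _
      have hR2 : ∑ j ∈ range (n+1), (-1:ℂ)^(j+1) * y^(3*j*j+5*j+2)
          = (∑ j ∈ range n, (-1:ℂ)^(j+1) * y^(3*j*j+5*j+2))
            + (-1:ℂ)^(n+1) * y^(3*n*n+5*n+2) :=
        Finset.sum_range_succ _ _
      rw [hsplit,
        Finset.sum_insert (by simp only [Finset.mem_insert, Finset.mem_Icc]; push_cast; omega),
        Finset.sum_insert (by simp only [Finset.mem_Icc]; push_cast; omega), ih,
        hgnat (n+1), hgneg (n+1),
        show 3*(n+1)*(n+1)-(n+1) = 3*n*n+5*n+2 by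
          rw [show 3*(n+1)*(n+1) = 3*n*n+6*n+3 by ring]; omega,
        hR1, hR2]
      ring
  -- error term
  set E : ℕ → ℂ := fun n => ∑ j ∈ range n, (-1:ℂ)^(j+1) * y^(2*n*(j+1) + (j+1)*(j+1+1)) *
      ∏ k ∈ Ico (j+1+1) (n+1), (1 - y^(2*k)) with hEdef
  have hprod_eq : ∀ n : ℕ, ∏ k ∈ range n, f k = ∏ k ∈ Ico 1 (n+1), (1 - y^(2*k)) := by
    intro n
    rw [Finset.prod_Ico_eq_prod_range]
    simp only [Nat.add_sub_cancel]
    exact Finset.prod_congr rfl (fun j _ => by rw [hfdef]; simp [add_comm])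
  have key : ∀ n : ℕ, (∑ k ∈ Finset.Icc (-(n:ℤ)) (n:ℤ), g k) - ∏ k ∈ range n, f k = E n := by
    intro n
    rw [hIcc n, ← shanks' y n, hprod_eq n,
      Finset.sum_range_succ' (fun j => (-1:ℂ)^j * y^(2*n*j + j*(j+1)) *
        ∏ k ∈ Ico (j+1) (n+1), (1 - y^(2*k))) n, hEdef]
    norm_num
  -- bound on the error term
  set T : ℝ := ∑' k : ℕ, (r^2)^k with hTdef
  have hTsum : Summable (fun k : ℕ => (r^2)^k) := summable_geometric_of_lt_one hr20 hr2
  have hT0 : 0 ≤ T := tsum_nonneg (fun k => by positivity)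
  set C : ℝ := Real.exp T with hCdef
  have hC0 : 0 < C := Real.exp_pos T
  have prodbound : ∀ s : Finset ℕ, (∏ k ∈ s, ‖1 - y^(2*k)‖) ≤ C := by
    intro s
    calc (∏ k ∈ s, ‖1 - y^(2*k)‖) ≤ ∏ k ∈ s, Real.exp ((r^2)^k) := by
          refine Finset.prod_le_prod (fun k _ => norm_nonneg _) (fun k _ => ?_)
          refine (norm_sub_le _ _).trans ?_
          rw [norm_one, hnormpow, pow_mul]
          linarith [Real.add_one_le_exp ((r^2)^k)]
      _ = Real.exp (∑ k ∈ s, (r^2)^k) := (Real.exp_sum s _).symm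
      _ ≤ C := Real.exp_le_exp.mpr (hTsum.sum_le_tsum s (fun k _ => by positivity))
  have hEbound : ∀ n : ℕ, ‖E n‖ ≤ C * r^(2*n) * T := by
    intro n
    rw [hEdef]
    refine (norm_sum_le _ _).trans ?_
    have hterm : ∀ j ∈ range n, ‖(-1:ℂ)^(j+1) * y^(2*n*(j+1) + (j+1)*(j+1+1)) *
        ∏ k ∈ Ico (j+1+1) (n+1), (1 - y^(2*k))‖ ≤ (C * r^(2*n)) * (r^2)^j := by
      intro j _
      rw [norm_mul, norm_mul, norm_pow, norm_neg, norm_one, one_pow, one_mul, hnormpow,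
        norm_prod]
      have h1 : r^(2*n*(j+1) + (j+1)*(j+1+1)) ≤ r^(2*n) * (r^2)^j := by
        rw [← pow_mul, ← pow_add]
        exact pow_le_pow_of_le_one hr0 hr1.le (by nlinarith)
      calc r^(2*n*(j+1) + (j+1)*(j+1+1)) * ∏ k ∈ Ico (j+1+1) (n+1), ‖1 - y^(2*k)‖
          ≤ (r^(2*n) * (r^2)^j) * C := by
            refine mul_le_mul h1 (prodbound _) (Finset.prod_nonneg (fun k _ => norm_nonneg _))
              (by positivity)
        _ = (C * r^(2*n)) * (r^2)^j := by ring
    refine (Finset.sum_le_sum hterm).trans ?_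
    rw [← Finset.mul_sum]
    have h2 : (∑ j ∈ range n, (r^2)^j) ≤ T :=
      hTsum.sum_le_tsum _ (fun k _ => by positivity)
    calc (C * r^(2*n)) * ∑ j ∈ range n, (r^2)^j ≤ (C * r^(2*n)) * T := by
          refine mul_le_mul_of_nonneg_left h2 (by positivity)
      _ = C * r^(2*n) * T := by ring
  have htendB : Tendsto (fun n : ℕ => C * r^(2*n) * T) atTop (𝓝 0) := by
    have h1 : Tendsto (fun n : ℕ => (r^2)^n) atTop (𝓝 0) :=
      tendsto_pow_atTop_nhds_zero_of_lt_one hr20 hr2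
    have h2 := (h1.const_mul C).mul_const T
    rw [mul_zero, zero_mul] at h2
    exact h2.congr (fun n => by rw [pow_mul])
  have herr0 : Tendsto (fun n : ℕ => (∑ k ∈ Finset.Icc (-(n:ℤ)) (n:ℤ), g k)
      - ∏ k ∈ range n, f k) atTop (𝓝 0) := by
    refine squeeze_zero_norm (fun n => ?_) htendB
    rw [key n]
    exact hEbound n
  have hlim2 : Tendsto (fun n : ℕ => ∑ k ∈ Finset.Icc (-(n:ℤ)) (n:ℤ), g k) atTop
      (𝓝 (∏' k, f k)) := by
    have h3 := herr0.add hP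
    rw [zero_add] at h3
    exact h3.congr (fun n => by ring)
  have hfinal : (∑' k, g k) = ∏' k, f k := tendsto_nhds_unique hS hlim2
  calc (∏' k : ℕ, (1 - Complex.exp (2 * ((k:ℂ) + 1) * (π:ℂ) * I * τ)))
      = ∏' k, f k := by exact tprod_congr hf_eq
    _ = ∑' k, g k := hfinal.symm
end

section
/- Jacobi's quartic theta-constant identity: θ₃(0|τ)⁴ = θ₂(0|τ)⁴ + θ₄(0|τ)⁴ for all τ in the upper half-plane. -/
open Complex Real

/-- The odd Jacobi theta function `θ₁`. -/
noncomputable def theta1 (x τ : ℂ) : ℂ :=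
  -I * ∑' k : ℤ, (-1 : ℂ) ^ k * Complex.exp (((k : ℂ) + 1 / 2) ^ 2 * (π : ℂ) * I * τ) *
    Complex.exp ((2 * (k : ℂ) + 1) * (π : ℂ) * I * x)

/-- The Jacobi theta function `θ₂`. -/
noncomputable def theta2 (x τ : ℂ) : ℂ :=
  ∑' k : ℤ, Complex.exp (((k : ℂ) + 1 / 2) ^ 2 * (π : ℂ) * I * τ) *
    Complex.exp ((2 * (k : ℂ) + 1) * (π : ℂ) * I * x)

/-- The Jacobi theta function `θ₃`. -/
noncomputable def theta3 (x τ : ℂ) : ℂ :=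
  ∑' k : ℤ, Complex.exp ((k : ℂ) ^ 2 * (π : ℂ) * I * τ) *
    Complex.exp (2 * (k : ℂ) * (π : ℂ) * I * x)

/-- The Jacobi theta function `θ₄`. -/
noncomputable def theta4 (x τ : ℂ) : ℂ :=
  ∑' k : ℤ, (-1 : ℂ) ^ k * Complex.exp ((k : ℂ) ^ 2 * (π : ℂ) * I * τ) *
    Complex.exp (2 * (k : ℂ) * (π : ℂ) * I * x)

namespace JacobiQuartic

/-- The `k`-th term of `θ₃(0|τ)`. -/
noncomputable def f3 (τ : ℂ) (k : ℤ) : ℂ := Complex.exp ((k : ℂ) ^ 2 * (π : ℂ) * I * τ)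

/-- The `k`-th term of `θ₂(0|τ)`. -/
noncomputable def f2 (τ : ℂ) (k : ℤ) : ℂ := Complex.exp (((k : ℂ) + 1 / 2) ^ 2 * (π : ℂ) * I * τ)

/-- The `k`-th term of `θ₄(0|τ)`. -/
noncomputable def f4 (τ : ℂ) (k : ℤ) : ℂ := (-1 : ℂ) ^ k * f3 τ k

lemma f3_eq (τ : ℂ) (k : ℤ) : f3 τ k = jacobiTheta₂_term k 0 τ := by
  unfold f3 jacobiTheta₂_term; congr 1; ring

lemma f4_eq (τ : ℂ) (k : ℤ) : f4 τ k = jacobiTheta₂_term k (1/2) τ := by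
  unfold f4 f3 jacobiTheta₂_term
  rw [show (2:ℂ)*π*I*k*(1/2) + π*I*k^2*τ = k*(π*I) + k^2*π*I*τ by ring, Complex.exp_add,
    Complex.exp_int_mul, Complex.exp_pi_mul_I]

lemma f2_eq (τ : ℂ) (k : ℤ) :
    f2 τ k = Complex.exp ((π:ℂ)*I*τ/4) * jacobiTheta₂_term k (τ/2) τ := by
  unfold f2 jacobiTheta₂_term; rw [← Complex.exp_add]; congr 1; ring

lemma sum3 {τ : ℂ} (hτ : 0 < τ.im) : Summable (f3 τ) := by
  have := (summable_jacobiTheta₂_term_iff 0 τ).mpr hτ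
  simpa only [← f3_eq] using this

lemma sum4 {τ : ℂ} (hτ : 0 < τ.im) : Summable (f4 τ) := by
  have := (summable_jacobiTheta₂_term_iff (1/2) τ).mpr hτ
  simpa only [← f4_eq] using this

lemma sum2 {τ : ℂ} (hτ : 0 < τ.im) : Summable (f2 τ) := by
  have := ((summable_jacobiTheta₂_term_iff (τ/2) τ).mpr hτ).mul_left (Complex.exp ((π:ℂ)*I*τ/4))
  simpa only [← f2_eq] using this

lemma nsum3 {τ : ℂ} (hτ : 0 < τ.im) : Summable fun k => ‖f3 τ k‖ := summable_norm_iff.mpr (sum3 hτ)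
lemma nsum4 {τ : ℂ} (hτ : 0 < τ.im) : Summable fun k => ‖f4 τ k‖ := summable_norm_iff.mpr (sum4 hτ)
lemma nsum2 {τ : ℂ} (hτ : 0 < τ.im) : Summable fun k => ‖f2 τ k‖ := summable_norm_iff.mpr (sum2 hτ)

lemma him {τ : ℂ} (hτ : 0 < τ.im) : 0 < (2*τ).im := by
  rw [Complex.mul_im]; simp; linarith

open Function in
lemma keyA (τ : ℂ) :
    ∑' p : ℤ × ℤ, (f3 τ p.1 * f3 τ p.2 + f4 τ p.1 * f4 τ p.2)
      = ∑' q : ℤ × ℤ, 2 * (f3 (2*τ) q.1 * f3 (2*τ) q.2) := by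
  apply tsum_eq_tsum_of_ne_zero_bij (fun x => (x.1.1 + x.1.2, x.1.1 - x.1.2))
  · intro a b h
    simp only [Prod.mk.injEq] at h
    apply Subtype.ext
    exact Prod.ext_iff.mpr ⟨by omega, by omega⟩
  · rintro ⟨p₁, p₂⟩ hp
    rcases Int.even_or_odd (p₁ + p₂) with ⟨r, hr⟩ | ⟨r, hr⟩
    · refine ⟨⟨(r, p₁ - r), ?_⟩, ?_⟩
      · simp only [mem_support]
        exact mul_ne_zero two_ne_zero (mul_ne_zero (Complex.exp_ne_zero _) (Complex.exp_ne_zero _))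
      · simp only [Prod.mk.injEq]; constructor <;> omega
    · exfalso; apply hp
      have h4 : f4 τ p₁ * f4 τ p₂ = -(f3 τ p₁ * f3 τ p₂) := by
        simp only [f4]
        rw [mul_mul_mul_comm, ← zpow_add₀ (by norm_num : (-1:ℂ) ≠ 0),
          Odd.neg_one_zpow ⟨r, by omega⟩]
        ring
      simp only [h4, add_neg_cancel]
  · rintro ⟨⟨r, s⟩, -⟩
    have e1 : f3 τ (r+s) * f3 τ (r-s) = f3 (2*τ) r * f3 (2*τ) s := by
      simp only [f3, ← Complex.exp_add]; congr 1; push_cast; ring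
    have e2 : f4 τ (r+s) * f4 τ (r-s) = f3 τ (r+s) * f3 τ (r-s) := by
      simp only [f4]
      rw [mul_mul_mul_comm, ← zpow_add₀ (by norm_num : (-1:ℂ) ≠ 0),
        Even.neg_one_zpow ⟨r, by ring⟩, one_mul]
    simp only [e2, e1, ← two_mul]

open Function in
lemma keyB (τ : ℂ) :
    ∑' p : ℤ × ℤ, (f3 τ p.1 * f3 τ p.2 - f4 τ p.1 * f4 τ p.2)
      = ∑' q : ℤ × ℤ, 2 * (f2 (2*τ) q.1 * f2 (2*τ) q.2) := by
  apply tsum_eq_tsum_of_ne_zero_bij (fun x => (x.1.1 + x.1.2 + 1, x.1.1 - x.1.2))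
  · intro a b h
    simp only [Prod.mk.injEq] at h
    apply Subtype.ext
    exact Prod.ext_iff.mpr ⟨by omega, by omega⟩
  · rintro ⟨p₁, p₂⟩ hp
    rcases Int.even_or_odd (p₁ + p₂) with ⟨r, hr⟩ | ⟨r, hr⟩
    · exfalso; apply hp
      have h4 : f4 τ p₁ * f4 τ p₂ = f3 τ p₁ * f3 τ p₂ := by
        simp only [f4]
        rw [mul_mul_mul_comm, ← zpow_add₀ (by norm_num : (-1:ℂ) ≠ 0),
          Even.neg_one_zpow ⟨r, by omega⟩, one_mul]
      simp only [h4, sub_self]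
    · refine ⟨⟨(r, p₁ - r - 1), ?_⟩, ?_⟩
      · simp only [mem_support]
        exact mul_ne_zero two_ne_zero (mul_ne_zero (Complex.exp_ne_zero _) (Complex.exp_ne_zero _))
      · simp only [Prod.mk.injEq]; constructor <;> omega
  · rintro ⟨⟨r, s⟩, -⟩
    have e1 : f3 τ (r+s+1) * f3 τ (r-s) = f2 (2*τ) r * f2 (2*τ) s := by
      simp only [f3, f2, ← Complex.exp_add]; congr 1; push_cast; ring
    have e2 : f4 τ (r+s+1) * f4 τ (r-s) = -(f3 τ (r+s+1) * f3 τ (r-s)) := by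
      simp only [f4]
      rw [mul_mul_mul_comm, ← zpow_add₀ (by norm_num : (-1:ℂ) ≠ 0),
        Odd.neg_one_zpow ⟨r, by ring⟩]
      ring
    simp only [e2, e1, sub_neg_eq_add, ← two_mul]

open Function in
lemma keyC1 (τ : ℂ) :
    ∑' p : ℤ × ℤ, ({q : ℤ × ℤ | Even (q.1 + q.2)}.indicator
        (fun p => f2 τ p.1 * f2 τ p.2) p)
      = ∑' q : ℤ × ℤ, f2 (2*τ) q.1 * f3 (2*τ) q.2 := by
  apply tsum_eq_tsum_of_ne_zero_bij (fun x => (x.1.1 + x.1.2, x.1.1 - x.1.2))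
  · intro a b h
    simp only [Prod.mk.injEq] at h
    apply Subtype.ext
    exact Prod.ext_iff.mpr ⟨by omega, by omega⟩
  · rintro ⟨p₁, p₂⟩ hp
    have hmem : (p₁, p₂) ∈ {q : ℤ × ℤ | Even (q.1 + q.2)} := by
      by_contra hc
      exact hp (Set.indicator_of_notMem hc _)
    obtain ⟨r, hr⟩ := hmem
    refine ⟨⟨(r, p₁ - r), ?_⟩, ?_⟩
    · simp only [mem_support]
      exact mul_ne_zero (Complex.exp_ne_zero _) (Complex.exp_ne_zero _)
    · simp only [Prod.mk.injEq]; constructor <;> omega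
  · rintro ⟨⟨r, s⟩, -⟩
    have hmem : ((r + s, r - s) : ℤ × ℤ) ∈ {q : ℤ × ℤ | Even (q.1 + q.2)} := ⟨r, by ring⟩
    rw [Set.indicator_of_mem hmem]
    simp only [f3, f2, ← Complex.exp_add]; congr 1; push_cast; ring

open Function in
lemma keyC2 (τ : ℂ) :
    ∑' p : ℤ × ℤ, ({q : ℤ × ℤ | Even (q.1 + q.2)}ᶜ.indicator
        (fun p => f2 τ p.1 * f2 τ p.2) p)
      = ∑' q : ℤ × ℤ, f3 (2*τ) q.1 * f2 (2*τ) q.2 := by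
  apply tsum_eq_tsum_of_ne_zero_bij (fun x => (x.1.1 + x.1.2, x.1.1 - x.1.2 - 1))
  · intro a b h
    simp only [Prod.mk.injEq] at h
    apply Subtype.ext
    exact Prod.ext_iff.mpr ⟨by omega, by omega⟩
  · rintro ⟨p₁, p₂⟩ hp
    have hmem : (p₁, p₂) ∈ {q : ℤ × ℤ | Even (q.1 + q.2)}ᶜ := by
      by_contra hc
      exact hp (Set.indicator_of_notMem hc _)
    have hodd : Odd (p₁ + p₂) := Int.not_even_iff_odd.mp hmem
    obtain ⟨r, hr⟩ := hodd
    refine ⟨⟨(r + 1, p₁ - r - 1), ?_⟩, ?_⟩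
    · simp only [mem_support]
      exact mul_ne_zero (Complex.exp_ne_zero _) (Complex.exp_ne_zero _)
    · simp only [Prod.mk.injEq]; constructor <;> omega
  · rintro ⟨⟨r, s⟩, -⟩
    have hmem : ((r + s, r - s - 1) : ℤ × ℤ) ∈ {q : ℤ × ℤ | Even (q.1 + q.2)}ᶜ := by
      simp only [Set.mem_compl_iff, Set.mem_setOf_eq, Int.even_iff, Int.not_even_iff]
      omega
    rw [Set.indicator_of_mem hmem]
    simp only [f3, f2, ← Complex.exp_add]; congr 1; push_cast; ring

lemma lemA {τ : ℂ} (hτ : 0 < τ.im) :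
    (∑' k : ℤ, f3 τ k) ^ 2 + (∑' k : ℤ, f4 τ k) ^ 2 = 2 * (∑' k : ℤ, f3 (2*τ) k) ^ 2 := by
  have h2 := him hτ
  rw [sq, sq, sq, tsum_mul_tsum_of_summable_norm (nsum3 hτ) (nsum3 hτ),
    tsum_mul_tsum_of_summable_norm (nsum4 hτ) (nsum4 hτ),
    tsum_mul_tsum_of_summable_norm (nsum3 h2) (nsum3 h2),
    ← Summable.tsum_add (summable_mul_of_summable_norm (nsum3 hτ) (nsum3 hτ))
      (summable_mul_of_summable_norm (nsum4 hτ) (nsum4 hτ)),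
    ← tsum_mul_left]
  exact keyA τ

lemma lemB {τ : ℂ} (hτ : 0 < τ.im) :
    (∑' k : ℤ, f3 τ k) ^ 2 - (∑' k : ℤ, f4 τ k) ^ 2 = 2 * (∑' k : ℤ, f2 (2*τ) k) ^ 2 := by
  have h2 := him hτ
  rw [sq, sq, sq, tsum_mul_tsum_of_summable_norm (nsum3 hτ) (nsum3 hτ),
    tsum_mul_tsum_of_summable_norm (nsum4 hτ) (nsum4 hτ),
    tsum_mul_tsum_of_summable_norm (nsum2 h2) (nsum2 h2),
    ← Summable.tsum_sub (α := ℂ) (summable_mul_of_summable_norm (nsum3 hτ) (nsum3 hτ))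
      (summable_mul_of_summable_norm (nsum4 hτ) (nsum4 hτ)),
    ← tsum_mul_left]
  exact keyB τ

lemma lemC {τ : ℂ} (hτ : 0 < τ.im) :
    (∑' k : ℤ, f2 τ k) ^ 2 = 2 * ((∑' k : ℤ, f2 (2*τ) k) * (∑' k : ℤ, f3 (2*τ) k)) := by
  have h2 := him hτ
  have hsum : Summable (fun p : ℤ × ℤ => f2 τ p.1 * f2 τ p.2) :=
    summable_mul_of_summable_norm (nsum2 hτ) (nsum2 hτ)
  set S : Set (ℤ × ℤ) := {q : ℤ × ℤ | Even (q.1 + q.2)} with hS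
  have hsplit : (fun p : ℤ × ℤ => f2 τ p.1 * f2 τ p.2)
      = fun p => S.indicator (fun p : ℤ × ℤ => f2 τ p.1 * f2 τ p.2) p
        + Sᶜ.indicator (fun p : ℤ × ℤ => f2 τ p.1 * f2 τ p.2) p := by
    funext p
    rw [← Pi.add_apply, Set.indicator_self_add_compl]
  rw [sq, tsum_mul_tsum_of_summable_norm (nsum2 hτ) (nsum2 hτ)]
  calc ∑' p : ℤ × ℤ, f2 τ p.1 * f2 τ p.2
      = ∑' p : ℤ × ℤ, (S.indicator (fun p : ℤ × ℤ => f2 τ p.1 * f2 τ p.2) p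
        + Sᶜ.indicator (fun p : ℤ × ℤ => f2 τ p.1 * f2 τ p.2) p) := by rw [← hsplit]
    _ = (∑' p : ℤ × ℤ, S.indicator (fun p : ℤ × ℤ => f2 τ p.1 * f2 τ p.2) p)
        + ∑' p : ℤ × ℤ, Sᶜ.indicator (fun p : ℤ × ℤ => f2 τ p.1 * f2 τ p.2) p :=
      Summable.tsum_add (hsum.indicator S) (hsum.indicator Sᶜ)
    _ = (∑' q : ℤ × ℤ, f2 (2*τ) q.1 * f3 (2*τ) q.2)
        + ∑' q : ℤ × ℤ, f3 (2*τ) q.1 * f2 (2*τ) q.2 := by rw [keyC1, keyC2]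
    _ = (∑' k : ℤ, f2 (2*τ) k) * (∑' k : ℤ, f3 (2*τ) k)
        + (∑' k : ℤ, f3 (2*τ) k) * (∑' k : ℤ, f2 (2*τ) k) := by
      rw [tsum_mul_tsum_of_summable_norm (nsum2 h2) (nsum3 h2),
        tsum_mul_tsum_of_summable_norm (nsum3 h2) (nsum2 h2)]
    _ = 2 * ((∑' k : ℤ, f2 (2*τ) k) * (∑' k : ℤ, f3 (2*τ) k)) := by ring

end JacobiQuartic

open JacobiQuartic in
/-- Jacobi's quartic identity: `θ₃(0|τ)⁴ = θ₂(0|τ)⁴ + θ₄(0|τ)⁴`. -/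
theorem jacobi_quartic_identity (τ : ℂ) (hτ : 0 < τ.im) :
    theta3 0 τ ^ 4 = theta2 0 τ ^ 4 + theta4 0 τ ^ 4 := by
  have h3 : theta3 0 τ = ∑' k : ℤ, f3 τ k := by simp [theta3, f3]
  have h4 : theta4 0 τ = ∑' k : ℤ, f4 τ k := by simp [theta4, f4, f3]
  have h2 : theta2 0 τ = ∑' k : ℤ, f2 τ k := by simp [theta2, f2]
  rw [h3, h4, h2]
  have hA := lemA hτ
  have hB := lemB hτ
  have hC := lemC hτ
  linear_combination ((∑' k : ℤ, f3 τ k) ^ 2 - (∑' k : ℤ, f4 τ k) ^ 2) * hA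
    + (2 * (∑' k : ℤ, f3 (2*τ) k) ^ 2) * hB
    + (-(∑' k : ℤ, f2 τ k) ^ 2 - 2 * ((∑' k : ℤ, f2 (2*τ) k) * (∑' k : ℤ, f3 (2*τ) k))) * hC
end

section
/- The theta function θ₃ satisfies the duplication relation θ₃(2x|τ)·θ₃(0|τ)³ = θ₂(x|τ)⁴ + θ₄(x|τ)⁴ for all x ∈ ℂ and all τ in the upper half-plane. -/
open Complex Real

namespace Theta3Dup

/-- Index type for quadruple sums. -/
abbrev Idx := ℤ × ℤ × ℤ × ℤ

/-- Sum of the four coordinates. -/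
def Spar (p : Idx) : ℤ := p.1 + p.2.1 + p.2.2.1 + p.2.2.2

def mapA (p : Idx) : Idx :=
  ((p.1 + p.2.1 + p.2.2.1 + p.2.2.2) / 2, (p.1 + p.2.1 - p.2.2.1 - p.2.2.2) / 2,
    (p.1 - p.2.1 + p.2.2.1 - p.2.2.2) / 2, (p.1 - p.2.1 - p.2.2.1 + p.2.2.2) / 2)

def mapB (p : Idx) : Idx :=
  ((p.1 + p.2.1 + p.2.2.1 + p.2.2.2 + 2) / 2, (p.1 + p.2.1 - p.2.2.1 - p.2.2.2) / 2,
    (p.1 - p.2.1 + p.2.2.1 - p.2.2.2) / 2, (p.1 - p.2.1 - p.2.2.1 + p.2.2.2) / 2)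

def mapC (p : Idx) : Idx :=
  ((p.1 + p.2.1 + p.2.2.1 + p.2.2.2 - 1) / 2, (p.1 + p.2.1 - p.2.2.1 - p.2.2.2 - 1) / 2,
    (p.1 - p.2.1 + p.2.2.1 - p.2.2.2 - 1) / 2, (p.1 - p.2.1 - p.2.2.1 + p.2.2.2 - 1) / 2)

def mapPo (p : Idx) : Idx :=
  ((p.1 + p.2.1 + p.2.2.1 + p.2.2.2 + 1) / 2, (p.1 + p.2.1 - p.2.2.1 - p.2.2.2 - 1) / 2,
    (p.1 - p.2.1 + p.2.2.1 - p.2.2.2 - 1) / 2, (-p.1 + p.2.1 + p.2.2.1 - p.2.2.2 - 1) / 2)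

def mapPe (p : Idx) : Idx :=
  ((p.1 + p.2.1 + p.2.2.1 - p.2.2.2) / 2, (p.1 + p.2.1 - p.2.2.1 + p.2.2.2) / 2,
    (p.1 - p.2.1 + p.2.2.1 + p.2.2.2) / 2, (p.1 - p.2.1 - p.2.2.1 - p.2.2.2 - 2) / 2)

/-- even-parity index set -/
def sE : Set Idx := {p | (p.1 + p.2.1 + p.2.2.1 + p.2.2.2) % 2 = 0}

noncomputable def T2 (τ x : ℂ) (p : Idx) : ℂ :=
  Complex.exp ((π : ℂ) * I * τ * (((p.1 : ℂ) + 1 / 2) ^ 2 + ((p.2.1 : ℂ) + 1 / 2) ^ 2 +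
      ((p.2.2.1 : ℂ) + 1 / 2) ^ 2 + ((p.2.2.2 : ℂ) + 1 / 2) ^ 2) +
    (π : ℂ) * I * x * (2 * ((p.1 : ℂ) + (p.2.1 : ℂ) + (p.2.2.1 : ℂ) + (p.2.2.2 : ℂ)) + 4))

noncomputable def T4 (τ x : ℂ) (p : Idx) : ℂ :=
  Complex.exp ((π : ℂ) * I * τ * ((p.1 : ℂ) ^ 2 + (p.2.1 : ℂ) ^ 2 +
      (p.2.2.1 : ℂ) ^ 2 + (p.2.2.2 : ℂ) ^ 2) +
    2 * (π : ℂ) * I * x * ((p.1 : ℂ) + (p.2.1 : ℂ) + (p.2.2.1 : ℂ) + (p.2.2.2 : ℂ)) +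
    (π : ℂ) * I * ((p.1 : ℂ) + (p.2.1 : ℂ) + (p.2.2.1 : ℂ) + (p.2.2.2 : ℂ)))

noncomputable def T3 (τ x : ℂ) (p : Idx) : ℂ :=
  Complex.exp ((π : ℂ) * I * τ * ((p.1 : ℂ) ^ 2 + (p.2.1 : ℂ) ^ 2 +
      (p.2.2.1 : ℂ) ^ 2 + (p.2.2.2 : ℂ) ^ 2) + 4 * (π : ℂ) * I * x * (p.1 : ℂ))

lemma exp_aux' {A B : ℂ} (n : ℤ) (h : A = B + (n : ℂ) * (2 * π * I)) :
    Complex.exp A = Complex.exp B := by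
  rw [h, Complex.exp_add, Complex.exp_int_mul_two_pi_mul_I, mul_one]

lemma exp_aux {A B : ℂ} (n : ℤ) (h : A = B + π * I + (n : ℂ) * (2 * π * I)) :
    Complex.exp A = -Complex.exp B := by
  rw [h, Complex.exp_add, Complex.exp_add, Complex.exp_int_mul_two_pi_mul_I,
    Complex.exp_pi_mul_I, mul_one]
  ring

lemma neg_one_zpow_eq (k : ℤ) : ((-1 : ℂ)) ^ k = Complex.exp ((k : ℂ) * (π * I)) := by
  rw [Complex.exp_int_mul, Complex.exp_pi_mul_I]

/-- Value lemma, even case: θ₄-term at `mapA n` equals the θ₃-term at `n`. -/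
lemma val_even (τ x : ℂ) (a b c d : ℤ) (h : (a + b + c + d) % 2 = 0) :
    T4 τ x (mapA (a, b, c, d)) = T3 τ x (a, b, c, d) := by
  simp only [mapA]
  obtain ⟨e1, he1⟩ : ∃ e, a + b + c + d = 2 * e := ⟨(a + b + c + d) / 2, by omega⟩
  obtain ⟨e2, he2⟩ : ∃ e, a + b - c - d = 2 * e := ⟨(a + b - c - d) / 2, by omega⟩
  obtain ⟨e3, he3⟩ : ∃ e, a - b + c - d = 2 * e := ⟨(a - b + c - d) / 2, by omega⟩
  obtain ⟨e4, he4⟩ : ∃ e, a - b - c + d = 2 * e := ⟨(a - b - c + d) / 2, by omega⟩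
  rw [show (a + b + c + d) / 2 = e1 by omega, show (a + b - c - d) / 2 = e2 by omega,
    show (a - b + c - d) / 2 = e3 by omega, show (a - b - c + d) / 2 = e4 by omega]
  have c1 : (e1 : ℂ) = ((a : ℂ) + b + c + d) / 2 := by
    have : ((a : ℂ) + b + c + d) = 2 * e1 := by exact_mod_cast he1
    field_simp [this]
    linear_combination -this
  have c2 : (e2 : ℂ) = ((a : ℂ) + b - c - d) / 2 := by
    have : ((a : ℂ) + b - c - d) = 2 * e2 := by exact_mod_cast he2
    field_simp [this]
    linear_combination -this
  have c3 : (e3 : ℂ) = ((a : ℂ) - b + c - d) / 2 := by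
    have : ((a : ℂ) - b + c - d) = 2 * e3 := by exact_mod_cast he3
    field_simp [this]
    linear_combination -this
  have c4 : (e4 : ℂ) = ((a : ℂ) - b - c + d) / 2 := by
    have : ((a : ℂ) - b - c + d) = 2 * e4 := by exact_mod_cast he4
    field_simp [this]
    linear_combination -this
  simp only [T4, T3]
  refine exp_aux' (n := a) ?_
  rw [c1, c2, c3, c4]
  ring

/-- Value lemma, odd case: θ₂-term at `mapC n` equals the θ₃-term at `n`. -/
lemma val_odd (τ x : ℂ) (a b c d : ℤ) (h : ¬ (a + b + c + d) % 2 = 0) :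
    T2 τ x (mapC (a, b, c, d)) = T3 τ x (a, b, c, d) := by
  simp only [mapC]
  obtain ⟨e1, he1⟩ : ∃ e, a + b + c + d - 1 = 2 * e := ⟨(a + b + c + d - 1) / 2, by omega⟩
  obtain ⟨e2, he2⟩ : ∃ e, a + b - c - d - 1 = 2 * e := ⟨(a + b - c - d - 1) / 2, by omega⟩
  obtain ⟨e3, he3⟩ : ∃ e, a - b + c - d - 1 = 2 * e := ⟨(a - b + c - d - 1) / 2, by omega⟩
  obtain ⟨e4, he4⟩ : ∃ e, a - b - c + d - 1 = 2 * e := ⟨(a - b - c + d - 1) / 2, by omega⟩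
  rw [show (a + b + c + d - 1) / 2 = e1 by omega, show (a + b - c - d - 1) / 2 = e2 by omega,
    show (a - b + c - d - 1) / 2 = e3 by omega, show (a - b - c + d - 1) / 2 = e4 by omega]
  have c1 : (e1 : ℂ) = ((a : ℂ) + b + c + d - 1) / 2 := by
    have : ((a : ℂ) + b + c + d - 1) = 2 * e1 := by exact_mod_cast he1
    field_simp [this]
    linear_combination -this
  have c2 : (e2 : ℂ) = ((a : ℂ) + b - c - d - 1) / 2 := by
    have : ((a : ℂ) + b - c - d - 1) = 2 * e2 := by exact_mod_cast he2
    field_simp [this]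
    linear_combination -this
  have c3 : (e3 : ℂ) = ((a : ℂ) - b + c - d - 1) / 2 := by
    have : ((a : ℂ) - b + c - d - 1) = 2 * e3 := by exact_mod_cast he3
    field_simp [this]
    linear_combination -this
  have c4 : (e4 : ℂ) = ((a : ℂ) - b - c + d - 1) / 2 := by
    have : ((a : ℂ) - b - c + d - 1) = 2 * e4 := by exact_mod_cast he4
    field_simp [this]
    linear_combination -this
  simp only [T2, T3]
  refine exp_aux' (n := 0) ?_
  rw [c1, c2, c3, c4]
  push_cast
  ring

/-- Cancellation lemma, odd case: θ₄-term at `mapB (mapPo k)` is the negative of the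
θ₂-term at `k`. -/
lemma val_cancel (τ x : ℂ) (a b c d : ℤ) (h : ¬ (a + b + c + d) % 2 = 0) :
    T4 τ x (mapB (mapPo (a, b, c, d))) = -T2 τ x (a, b, c, d) := by
  have hcomp : mapB (mapPo (a, b, c, d)) =
      ((a + b + c - d + 1) / 2, (a + b - c + d + 1) / 2,
        (a - b + c + d + 1) / 2, (-a + b + c + d + 1) / 2) := by
    simp only [mapB, mapPo, Prod.mk.injEq]
    refine ⟨by omega, by omega, by omega, by omega⟩
  rw [hcomp]
  obtain ⟨e1, he1⟩ : ∃ e, a + b + c - d + 1 = 2 * e := ⟨(a + b + c - d + 1) / 2, by omega⟩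
  obtain ⟨e2, he2⟩ : ∃ e, a + b - c + d + 1 = 2 * e := ⟨(a + b - c + d + 1) / 2, by omega⟩
  obtain ⟨e3, he3⟩ : ∃ e, a - b + c + d + 1 = 2 * e := ⟨(a - b + c + d + 1) / 2, by omega⟩
  obtain ⟨e4, he4⟩ : ∃ e, -a + b + c + d + 1 = 2 * e := ⟨(-a + b + c + d + 1) / 2, by omega⟩
  obtain ⟨s, hs⟩ : ∃ e, a + b + c + d + 1 = 2 * e := ⟨(a + b + c + d + 1) / 2, by omega⟩
  rw [show (a + b + c - d + 1) / 2 = e1 by omega, show (a + b - c + d + 1) / 2 = e2 by omega,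
    show (a - b + c + d + 1) / 2 = e3 by omega, show (-a + b + c + d + 1) / 2 = e4 by omega]
  have c1 : (e1 : ℂ) = ((a : ℂ) + b + c - d + 1) / 2 := by
    have : ((a : ℂ) + b + c - d + 1) = 2 * e1 := by exact_mod_cast he1
    field_simp [this]
    linear_combination -this
  have c2 : (e2 : ℂ) = ((a : ℂ) + b - c + d + 1) / 2 := by
    have : ((a : ℂ) + b - c + d + 1) = 2 * e2 := by exact_mod_cast he2
    field_simp [this]
    linear_combination -this
  have c3 : (e3 : ℂ) = ((a : ℂ) - b + c + d + 1) / 2 := by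
    have : ((a : ℂ) - b + c + d + 1) = 2 * e3 := by exact_mod_cast he3
    field_simp [this]
    linear_combination -this
  have c4 : (e4 : ℂ) = ((-a : ℂ) + b + c + d + 1) / 2 := by
    have : ((-a : ℂ) + b + c + d + 1) = 2 * e4 := by exact_mod_cast he4
    field_simp [this]
    linear_combination -this
  have cs : (s : ℂ) = ((a : ℂ) + b + c + d + 1) / 2 := by
    have : ((a : ℂ) + b + c + d + 1) = 2 * s := by exact_mod_cast hs
    field_simp [this]
    linear_combination -this
  simp only [T4, T2]
  refine exp_aux (n := s) ?_
  rw [c1, c2, c3, c4, cs]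
  ring

lemma mem_sE_iff (p : Idx) : p ∈ sE ↔ (p.1 + p.2.1 + p.2.2.1 + p.2.2.2) % 2 = 0 := Iff.rfl

lemma mem_sEc_iff (p : Idx) : p ∈ sEᶜ ↔ ¬ (p.1 + p.2.1 + p.2.2.1 + p.2.2.2) % 2 = 0 := Iff.rfl

/-- `mapA` as a self-equivalence of the even set. -/
def equivA : sE ≃ sE where
  toFun p := ⟨mapA p.1, by
    obtain ⟨⟨a, b, c, d⟩, hp⟩ := p
    simp only [mem_sE_iff, mapA] at hp ⊢
    omega⟩
  invFun p := ⟨mapA p.1, by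
    obtain ⟨⟨a, b, c, d⟩, hp⟩ := p
    simp only [mem_sE_iff, mapA] at hp ⊢
    omega⟩
  left_inv p := by
    obtain ⟨⟨a, b, c, d⟩, hp⟩ := p
    simp only [mem_sE_iff] at hp
    refine Subtype.ext ?_
    simp only [mapA, Prod.mk.injEq]
    refine ⟨by omega, by omega, by omega, by omega⟩
  right_inv p := by
    obtain ⟨⟨a, b, c, d⟩, hp⟩ := p
    simp only [mem_sE_iff] at hp
    refine Subtype.ext ?_
    simp only [mapA, Prod.mk.injEq]
    refine ⟨by omega, by omega, by omega, by omega⟩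

/-- `mapC` as an equivalence from the odd set to the even set, with inverse `mapB`. -/
def equivC : ↥(sEᶜ) ≃ ↥sE where
  toFun p := ⟨mapC p.1, by
    obtain ⟨⟨a, b, c, d⟩, hp⟩ := p
    simp only [mem_sEc_iff] at hp
    simp only [mem_sE_iff, mapC]
    omega⟩
  invFun p := ⟨mapB p.1, by
    obtain ⟨⟨a, b, c, d⟩, hp⟩ := p
    simp only [mem_sE_iff] at hp
    simp only [mem_sEc_iff, mapB]
    omega⟩
  left_inv p := by
    obtain ⟨⟨a, b, c, d⟩, hp⟩ := p
    simp only [mem_sEc_iff] at hp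
    refine Subtype.ext ?_
    simp only [mapC, mapB, Prod.mk.injEq]
    refine ⟨by omega, by omega, by omega, by omega⟩
  right_inv p := by
    obtain ⟨⟨a, b, c, d⟩, hp⟩ := p
    simp only [mem_sE_iff] at hp
    refine Subtype.ext ?_
    simp only [mapC, mapB, Prod.mk.injEq]
    refine ⟨by omega, by omega, by omega, by omega⟩

/-- `mapB ∘ mapPo` as a self-equivalence of the odd set. -/
def equivPsi : ↥(sEᶜ) ≃ ↥(sEᶜ) where
  toFun p := ⟨mapB (mapPo p.1), by
    obtain ⟨⟨a, b, c, d⟩, hp⟩ := p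
    simp only [mem_sEc_iff] at hp
    simp only [mem_sEc_iff, mapB, mapPo]
    omega⟩
  invFun p := ⟨mapPe (mapC p.1), by
    obtain ⟨⟨a, b, c, d⟩, hp⟩ := p
    simp only [mem_sEc_iff] at hp
    simp only [mem_sEc_iff, mapPe, mapC]
    omega⟩
  left_inv p := by
    obtain ⟨⟨a, b, c, d⟩, hp⟩ := p
    simp only [mem_sEc_iff] at hp
    refine Subtype.ext ?_
    simp only [mapB, mapPo, mapPe, mapC, Prod.mk.injEq]
    refine ⟨by omega, by omega, by omega, by omega⟩
  right_inv p := by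
    obtain ⟨⟨a, b, c, d⟩, hp⟩ := p
    simp only [mem_sEc_iff] at hp
    refine Subtype.ext ?_
    simp only [mapB, mapPo, mapPe, mapC, Prod.mk.injEq]
    refine ⟨by omega, by omega, by omega, by omega⟩

lemma summable_norm_jt (z τ : ℂ) (hτ : 0 < τ.im) :
    Summable fun n : ℤ => ‖jacobiTheta₂_term n z τ‖ := by
  refine Summable.of_nonneg_of_le (fun _ => norm_nonneg _) (fun n => ?_)
    ((summable_pow_mul_jacobiTheta₂_term_bound |z.im| hτ 0).congr fun n => by
      rw [pow_zero, one_mul])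
  exact norm_jacobiTheta₂_term_le hτ le_rfl le_rfl n

lemma tsum4 {f g h i : ℤ → ℂ} (hf : Summable fun k => ‖f k‖) (hg : Summable fun k => ‖g k‖)
    (hh : Summable fun k => ‖h k‖) (hi : Summable fun k => ‖i k‖) :
    (∑' k, f k) * ((∑' k, g k) * ((∑' k, h k) * (∑' k, i k))) =
      ∑' p : Idx, f p.1 * (g p.2.1 * (h p.2.2.1 * i p.2.2.2)) := by
  rw [tsum_mul_tsum_of_summable_norm hh hi,
    tsum_mul_tsum_of_summable_norm hg (hh.mul_norm hi),
    tsum_mul_tsum_of_summable_norm hf (hg.mul_norm (hh.mul_norm hi))]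

end Theta3Dup

open Theta3Dup in
/-- Duplication relation for `θ₃`: `θ₃(2x|τ)·θ₃(0|τ)³ = θ₂(x|τ)⁴ + θ₄(x|τ)⁴`. -/
theorem theta3_duplication (x τ : ℂ) (hτ : 0 < τ.im) :
    theta3 (2 * x) τ * theta3 0 τ ^ 3 = theta2 x τ ^ 4 + theta4 x τ ^ 4 := by

  classical
  open Theta3Dup in
  have hjt : ∀ z : ℂ, Summable fun n : ℤ => ‖jacobiTheta₂_term n z τ‖ :=
    fun z => summable_norm_jt z τ hτ
  have hn2 : Summable fun k : ℤ => ‖Complex.exp (((k : ℂ) + 1 / 2) ^ 2 * (π : ℂ) * I * τ) *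
      Complex.exp ((2 * (k : ℂ) + 1) * (π : ℂ) * I * x)‖ := by
    refine ((hjt (x + τ / 2)).mul_left ‖Complex.exp ((π : ℂ) * I * τ / 4 + (π : ℂ) * I * x)‖).congr
      fun k => ?_
    rw [← norm_mul]
    congr 1
    rw [jacobiTheta₂_term, ← Complex.exp_add, ← Complex.exp_add]
    congr 1
    ring
  have hn4 : Summable fun k : ℤ => ‖(-1 : ℂ) ^ k * Complex.exp ((k : ℂ) ^ 2 * (π : ℂ) * I * τ) *
      Complex.exp (2 * (k : ℂ) * (π : ℂ) * I * x)‖ := by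
    refine (hjt (x + 1 / 2)).congr fun k => ?_
    congr 1
    rw [neg_one_zpow_eq, jacobiTheta₂_term, ← Complex.exp_add, ← Complex.exp_add]
    congr 1
    ring
  have hn3 : ∀ y : ℂ, Summable fun k : ℤ => ‖Complex.exp ((k : ℂ) ^ 2 * (π : ℂ) * I * τ) *
      Complex.exp (2 * (k : ℂ) * (π : ℂ) * I * y)‖ := by
    intro y
    refine (hjt y).congr fun k => ?_
    congr 1
    rw [jacobiTheta₂_term, ← Complex.exp_add]
    congr 1
    ring
  have key2 : ∀ p : Idx,
      (Complex.exp (((p.1 : ℂ) + 1 / 2) ^ 2 * (π : ℂ) * I * τ) *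
        Complex.exp ((2 * (p.1 : ℂ) + 1) * (π : ℂ) * I * x)) *
      ((Complex.exp (((p.2.1 : ℂ) + 1 / 2) ^ 2 * (π : ℂ) * I * τ) *
        Complex.exp ((2 * (p.2.1 : ℂ) + 1) * (π : ℂ) * I * x)) *
      ((Complex.exp (((p.2.2.1 : ℂ) + 1 / 2) ^ 2 * (π : ℂ) * I * τ) *
        Complex.exp ((2 * (p.2.2.1 : ℂ) + 1) * (π : ℂ) * I * x)) *
      (Complex.exp (((p.2.2.2 : ℂ) + 1 / 2) ^ 2 * (π : ℂ) * I * τ) *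
        Complex.exp ((2 * (p.2.2.2 : ℂ) + 1) * (π : ℂ) * I * x)))) = T2 τ x p := by
    rintro ⟨a, b, c, d⟩
    simp only [T2, ← Complex.exp_add]
    congr 1
    ring
  have key4 : ∀ p : Idx,
      ((-1 : ℂ) ^ p.1 * Complex.exp ((p.1 : ℂ) ^ 2 * (π : ℂ) * I * τ) *
        Complex.exp (2 * (p.1 : ℂ) * (π : ℂ) * I * x)) *
      (((-1 : ℂ) ^ p.2.1 * Complex.exp ((p.2.1 : ℂ) ^ 2 * (π : ℂ) * I * τ) *
        Complex.exp (2 * (p.2.1 : ℂ) * (π : ℂ) * I * x)) *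
      (((-1 : ℂ) ^ p.2.2.1 * Complex.exp ((p.2.2.1 : ℂ) ^ 2 * (π : ℂ) * I * τ) *
        Complex.exp (2 * (p.2.2.1 : ℂ) * (π : ℂ) * I * x)) *
      ((-1 : ℂ) ^ p.2.2.2 * Complex.exp ((p.2.2.2 : ℂ) ^ 2 * (π : ℂ) * I * τ) *
        Complex.exp (2 * (p.2.2.2 : ℂ) * (π : ℂ) * I * x)))) = T4 τ x p := by
    rintro ⟨a, b, c, d⟩
    simp only [T4, neg_one_zpow_eq, ← Complex.exp_add]
    congr 1
    ring
  have key3 : ∀ p : Idx,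
      (Complex.exp ((p.1 : ℂ) ^ 2 * (π : ℂ) * I * τ) *
        Complex.exp (2 * (p.1 : ℂ) * (π : ℂ) * I * (2 * x))) *
      ((Complex.exp ((p.2.1 : ℂ) ^ 2 * (π : ℂ) * I * τ) *
        Complex.exp (2 * (p.2.1 : ℂ) * (π : ℂ) * I * 0)) *
      ((Complex.exp ((p.2.2.1 : ℂ) ^ 2 * (π : ℂ) * I * τ) *
        Complex.exp (2 * (p.2.2.1 : ℂ) * (π : ℂ) * I * 0)) *
      (Complex.exp ((p.2.2.2 : ℂ) ^ 2 * (π : ℂ) * I * τ) *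
        Complex.exp (2 * (p.2.2.2 : ℂ) * (π : ℂ) * I * 0)))) = T3 τ x p := by
    rintro ⟨a, b, c, d⟩
    simp only [T3, ← Complex.exp_add]
    congr 1
    ring
  have e2 : theta2 x τ ^ 4 = ∑' p : Idx, T2 τ x p := by
    rw [show theta2 x τ ^ 4 = theta2 x τ * (theta2 x τ * (theta2 x τ * theta2 x τ)) by ring]
    rw [theta2, tsum4 hn2 hn2 hn2 hn2]
    exact tsum_congr key2
  have e4 : theta4 x τ ^ 4 = ∑' p : Idx, T4 τ x p := by
    rw [show theta4 x τ ^ 4 = theta4 x τ * (theta4 x τ * (theta4 x τ * theta4 x τ)) by ring]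
    rw [theta4, tsum4 hn4 hn4 hn4 hn4]
    exact tsum_congr key4
  have e3 : theta3 (2 * x) τ * theta3 0 τ ^ 3 = ∑' p : Idx, T3 τ x p := by
    rw [show theta3 (2 * x) τ * theta3 0 τ ^ 3 =
      theta3 (2 * x) τ * (theta3 0 τ * (theta3 0 τ * theta3 0 τ)) by ring]
    simp only [theta3]
    rw [tsum4 (hn3 (2 * x)) (hn3 0) (hn3 0) (hn3 0)]
    exact tsum_congr key3
  have sT2 : Summable (T2 τ x) :=
    ((Summable.of_norm (hn2.mul_norm (hn2.mul_norm (hn2.mul_norm hn2)))).congr key2)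
  have sT4 : Summable (T4 τ x) :=
    ((Summable.of_norm (hn4.mul_norm (hn4.mul_norm (hn4.mul_norm hn4)))).congr key4)
  have sT3 : Summable (T3 τ x) :=
    ((Summable.of_norm
      (((hn3 (2 * x))).mul_norm ((hn3 0).mul_norm ((hn3 0).mul_norm (hn3 0))))).congr key3)
  have A1 : ∑' (p : ↥sE), T4 τ x ↑p = ∑' (p : ↥sE), T3 τ x ↑p := by
    rw [← Equiv.tsum_eq equivA fun p : ↥sE => T4 τ x ↑p]
    refine tsum_congr fun q => ?_
    obtain ⟨⟨a, b, c, d⟩, hq⟩ := q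
    exact val_even τ x a b c d hq
  have A2 : ∑' (p : ↥sE), T2 τ x ↑p = ∑' (q : ↥(sEᶜ)), T3 τ x ↑q := by
    rw [← Equiv.tsum_eq equivC fun p : ↥sE => T2 τ x ↑p]
    refine tsum_congr fun q => ?_
    obtain ⟨⟨a, b, c, d⟩, hq⟩ := q
    exact val_odd τ x a b c d hq
  have A3 : ∑' (q : ↥(sEᶜ)), T4 τ x ↑q = -∑' (q : ↥(sEᶜ)), T2 τ x ↑q := by
    rw [← Equiv.tsum_eq equivPsi fun q : ↥(sEᶜ) => T4 τ x ↑q, ← tsum_neg]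
    refine tsum_congr fun q => ?_
    obtain ⟨⟨a, b, c, d⟩, hq⟩ := q
    exact val_cancel τ x a b c d hq
  have s2 := Summable.tsum_add_tsum_compl (s := sE) (sT2.subtype _) (sT2.subtype _)
  have s4 := Summable.tsum_add_tsum_compl (s := sE) (sT4.subtype _) (sT4.subtype _)
  have s3 := Summable.tsum_add_tsum_compl (s := sE) (sT3.subtype _) (sT3.subtype _)
  rw [e2, e4, e3, ← s2, ← s4, ← s3]
  linear_combination -A1 - A2 - A3
end

section
/- The quarter-period theta values satisfy θ₄(1/4|τ) = θ₃(1/4|τ) and θ₂(1/4|τ) = θ₁(1/4|τ), and moreover 2·θ₃(1/4|τ)⁴ = θ₄(0|τ)·θ₃(0|τ)³ + θ₃(0|τ)·θ₄(0|τ)³ and 2·θ₁(1/4|τ)⁴ = θ₄(0|τ)·θ₃(0|τ)³ − θ₃(0|τ)·θ₄(0|τ)³, for all τ in the upper half-plane. -/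
open Complex Real

noncomputable def Zq : ℂ := Complex.exp ((π : ℂ) * I / 4)
noncomputable def Qq (τ : ℂ) : ℂ := Complex.exp ((π : ℂ) * I * τ / 4)
noncomputable def NF (τ : ℂ) (A B : ℤ) : ℂ := Zq ^ A * Qq τ ^ B
noncomputable def TT (τ : ℂ) (a b c d e : ℤ) : ℂ :=
  ∑' k : ℤ, NF τ (a * k + b) (c * k ^ 2 + d * k + e)

lemma Zq_ne : Zq ≠ 0 := Complex.exp_ne_zero _
lemma Qq_ne (τ : ℂ) : Qq τ ≠ 0 := Complex.exp_ne_zero _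

lemma Zq_zpow (n : ℤ) : Zq ^ n = Complex.exp ((n : ℂ) * ((π : ℂ) * I / 4)) :=
  (Complex.exp_int_mul _ n).symm

lemma Qq_zpow (τ : ℂ) (n : ℤ) : Qq τ ^ n = Complex.exp ((n : ℂ) * ((π : ℂ) * I * τ / 4)) :=
  (Complex.exp_int_mul _ n).symm

lemma Zq_eight : Zq ^ (8 : ℤ) = 1 := by
  rw [Zq_zpow, show ((8 : ℤ) : ℂ) * ((π : ℂ) * I / 4) = 2 * π * I by push_cast; ring,
    Complex.exp_two_pi_mul_I]

lemma Zq_four : Zq ^ (4 : ℤ) = -1 := by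
  rw [Zq_zpow, show ((4 : ℤ) : ℂ) * ((π : ℂ) * I / 4) = π * I by push_cast; ring,
    Complex.exp_pi_mul_I]

lemma NF_mul (τ : ℂ) (A B A' B' : ℤ) : NF τ A B * NF τ A' B' = NF τ (A + A') (B + B') := by
  simp only [NF, zpow_add₀ Zq_ne, zpow_add₀ (Qq_ne τ)]; ring

lemma NF_congr (τ : ℂ) (A B A' B' t : ℤ) (hA : A = A' + 8 * t) (hB : B = B') :
    NF τ A B = NF τ A' B' := by
  subst hA hB
  simp only [NF, zpow_add₀ Zq_ne, zpow_mul, Zq_eight, one_zpow, mul_one]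

lemma NF_neg (τ : ℂ) (A B : ℤ) : NF τ (A + 4) B = -NF τ A B := by
  simp only [NF, zpow_add₀ Zq_ne, Zq_four]; ring

lemma NF_cancel (τ : ℂ) (A B A' B' t : ℤ) (hA : A = A' + 8 * t + 4) (hB : B = B') :
    NF τ A B + NF τ A' B' = 0 := by
  have h1 : NF τ A B = NF τ (A' + 4) B' := NF_congr τ A B (A' + 4) B' t (by omega) hB
  rw [h1, NF_neg]; ring

lemma NF_term_eq (τ : ℂ) (a b c d e k : ℤ) :
    NF τ (a * k + b) (c * k ^ 2 + d * k + e) =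
      (Zq ^ b * Qq τ ^ e) * jacobiTheta₂_term k ((a : ℂ) / 8 + (d : ℂ) * τ / 8) ((c : ℂ) * τ / 4) := by
  rw [NF, Zq_zpow, Qq_zpow, jacobiTheta₂_term, Zq_zpow, Qq_zpow, ← Complex.exp_add,
    ← Complex.exp_add, ← Complex.exp_add]
  congr 1
  push_cast
  ring

lemma NF_norm_summable (τ : ℂ) (hτ : 0 < τ.im) (a b c d e : ℤ) (hc : 0 < c) :
    Summable fun k : ℤ => ‖NF τ (a * k + b) (c * k ^ 2 + d * k + e)‖ := by
  have him : 0 < ((c : ℂ) * τ / 4).im := by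
    have : ((c : ℂ) * τ / 4).im = (c : ℝ) * τ.im / 4 := by
      simp [Complex.div_im, Complex.mul_im]
    rw [this]
    positivity
  have h1 : Summable (jacobiTheta₂_term · ((a : ℂ) / 8 + (d : ℂ) * τ / 8) ((c : ℂ) * τ / 4)) :=
    (summable_jacobiTheta₂_term_iff _ _).mpr him
  have h2 := summable_norm_iff.mpr (h1.mul_left (Zq ^ b * Qq τ ^ e))
  exact h2.congr fun k => by rw [NF_term_eq]

lemma NF_summable (τ : ℂ) (hτ : 0 < τ.im) (a b c d e : ℤ) (hc : 0 < c) :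
    Summable fun k : ℤ => NF τ (a * k + b) (c * k ^ 2 + d * k + e) :=
  (NF_norm_summable τ hτ a b c d e hc).of_norm

def Emap (p : ℤ × ℤ) : ℤ × ℤ := (p.1 + p.2, p.1 - p.2)
def Emap' (p : ℤ × ℤ) : ℤ × ℤ := (p.1 + p.2 + 1, p.1 - p.2)

lemma Emap_inj : Function.Injective Emap := by
  intro p q h
  simp only [Emap, Prod.mk.injEq, Prod.ext_iff] at h ⊢
  omega

lemma Emap'_inj : Function.Injective Emap' := by
  intro p q h
  simp only [Emap', Prod.mk.injEq, Prod.ext_iff] at h ⊢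
  omega

lemma Emap_range {j l : ℤ} (h : ¬ Odd (j + l)) : (j, l) ∈ Set.range Emap := by
  rw [Int.not_odd_iff_even] at h
  obtain ⟨m, hm⟩ := h
  exact ⟨(m, j - m), by simp only [Emap, Prod.mk.injEq]; omega⟩

lemma Emap'_range {j l : ℤ} (h : Odd (j + l)) : (j, l) ∈ Set.range Emap' := by
  obtain ⟨m, hm⟩ := h
  exact ⟨(m, j - 1 - m), by simp only [Emap', Prod.mk.injEq]; omega⟩

lemma P1 (τ : ℂ) (hτ : 0 < τ.im) :
    TT τ 0 0 4 0 0 * TT τ 4 0 4 0 0 = TT τ 4 0 8 0 0 * TT τ 4 0 8 0 0 := by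
  have hfn := NF_norm_summable τ hτ 0 0 4 0 0 (by norm_num)
  have hgn := NF_norm_summable τ hτ 4 0 4 0 0 (by norm_num)
  have hbn := NF_norm_summable τ hτ 4 0 8 0 0 (by norm_num)
  set f : ℤ → ℂ := fun k => NF τ (0 * k + 0) (4 * k ^ 2 + 0 * k + 0) with hf
  set g : ℤ → ℂ := fun k => NF τ (4 * k + 0) (4 * k ^ 2 + 0 * k + 0) with hg
  set b : ℤ → ℂ := fun k => NF τ (4 * k + 0) (8 * k ^ 2 + 0 * k + 0) with hb
  set F : ℤ × ℤ → ℂ := fun p => f p.1 * g p.2 + f p.2 * g p.1 with hF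
  have hs1 : Summable fun p : ℤ × ℤ => f p.1 * g p.2 := summable_mul_of_summable_norm hfn hgn
  have hs2 : Summable fun p : ℤ × ℤ => f p.2 * g p.1 :=
    (summable_mul_of_summable_norm hgn hfn).congr fun p => mul_comm _ _
  have hA : ∑' p : ℤ × ℤ, F p = 2 * (TT τ 0 0 4 0 0 * TT τ 4 0 4 0 0) := by
    rw [hF, Summable.tsum_add hs1 hs2]
    have e1 : ∑' p : ℤ × ℤ, f p.2 * g p.1 = ∑' p : ℤ × ℤ, f p.1 * g p.2 := by
      rw [← (Equiv.prodComm ℤ ℤ).tsum_eq (fun p : ℤ × ℤ => f p.1 * g p.2)]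
      rfl
    rw [e1, ← tsum_mul_tsum_of_summable_norm hfn hgn]
    simp only [TT, hf, hg]
    ring
  have hB : ∑' p : ℤ × ℤ, F (Emap p) = ∑' p : ℤ × ℤ, F p := by
    apply Emap_inj.tsum_eq
    intro p hp
    rcases p with ⟨j, l⟩
    by_contra hr
    apply hp
    have hodd : Odd (j + l) := by
      by_contra h
      exact hr (Emap_range h)
    obtain ⟨t, ht⟩ := hodd
    show f j * g l + f l * g j = 0
    rw [hf, hg]
    simp only []
    rw [NF_mul, NF_mul]
    exact NF_cancel τ _ _ _ _ (t - j) (by omega) (by ring)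
  have hC : ∀ p : ℤ × ℤ, F (Emap p) = 2 * (b p.1 * b p.2) := by
    rintro ⟨m, n⟩
    show f (m + n) * g (m - n) + f (m - n) * g (m + n) = 2 * (b m * b n)
    rw [hf, hg, hb]
    simp only []
    rw [NF_mul, NF_mul, NF_mul]
    rw [NF_congr τ (0 * (m + n) + 0 + (4 * (m - n) + 0)) _
        (4 * m + 0 + (4 * n + 0)) (8 * m ^ 2 + 0 * m + 0 + (8 * n ^ 2 + 0 * n + 0)) (-n)
        (by ring) (by ring),
      NF_congr τ (0 * (m - n) + 0 + (4 * (m + n) + 0)) _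
        (4 * m + 0 + (4 * n + 0)) (8 * m ^ 2 + 0 * m + 0 + (8 * n ^ 2 + 0 * n + 0)) 0
        (by ring) (by ring)]
    ring
  have hD : ∑' p : ℤ × ℤ, F (Emap p) = 2 * (TT τ 4 0 8 0 0 * TT τ 4 0 8 0 0) := by
    rw [tsum_congr hC, tsum_mul_left, ← tsum_mul_tsum_of_summable_norm hbn hbn]
    simp only [TT, hb]
  have h2 := hD.symm.trans (hB.trans hA)
  exact (mul_left_cancel₀ two_ne_zero h2).symm

lemma P2 (τ : ℂ) (hτ : 0 < τ.im) :
    TT τ 0 0 4 0 0 * TT τ 0 0 4 0 0 + TT τ 4 0 4 0 0 * TT τ 4 0 4 0 0 =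
      2 * (TT τ 0 0 8 0 0 * TT τ 0 0 8 0 0) := by
  have hfn := NF_norm_summable τ hτ 0 0 4 0 0 (by norm_num)
  have hgn := NF_norm_summable τ hτ 4 0 4 0 0 (by norm_num)
  have han := NF_norm_summable τ hτ 0 0 8 0 0 (by norm_num)
  set f : ℤ → ℂ := fun k => NF τ (0 * k + 0) (4 * k ^ 2 + 0 * k + 0) with hf
  set g : ℤ → ℂ := fun k => NF τ (4 * k + 0) (4 * k ^ 2 + 0 * k + 0) with hg
  set a : ℤ → ℂ := fun k => NF τ (0 * k + 0) (8 * k ^ 2 + 0 * k + 0) with ha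
  set F : ℤ × ℤ → ℂ := fun p => f p.1 * f p.2 + g p.1 * g p.2 with hF
  have hs1 : Summable fun p : ℤ × ℤ => f p.1 * f p.2 := summable_mul_of_summable_norm hfn hfn
  have hs2 : Summable fun p : ℤ × ℤ => g p.1 * g p.2 := summable_mul_of_summable_norm hgn hgn
  have hA : ∑' p : ℤ × ℤ, F p =
      TT τ 0 0 4 0 0 * TT τ 0 0 4 0 0 + TT τ 4 0 4 0 0 * TT τ 4 0 4 0 0 := by
    rw [hF, Summable.tsum_add hs1 hs2, ← tsum_mul_tsum_of_summable_norm hfn hfn,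
      ← tsum_mul_tsum_of_summable_norm hgn hgn]
    simp only [TT, hf, hg]
  have hB : ∑' p : ℤ × ℤ, F (Emap p) = ∑' p : ℤ × ℤ, F p := by
    apply Emap_inj.tsum_eq
    intro p hp
    rcases p with ⟨j, l⟩
    by_contra hr
    apply hp
    have hodd : Odd (j + l) := by
      by_contra h
      exact hr (Emap_range h)
    obtain ⟨t, ht⟩ := hodd
    show f j * f l + g j * g l = 0
    rw [hf, hg]
    simp only []
    rw [NF_mul, NF_mul]
    exact NF_cancel τ _ _ _ _ (-t - 1) (by omega) (by ring)
  have hC : ∀ p : ℤ × ℤ, F (Emap p) = 2 * (a p.1 * a p.2) := by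
    rintro ⟨m, n⟩
    show f (m + n) * f (m - n) + g (m + n) * g (m - n) = 2 * (a m * a n)
    rw [hf, hg, ha]
    simp only []
    rw [NF_mul, NF_mul, NF_mul]
    rw [NF_congr τ (0 * (m + n) + 0 + (0 * (m - n) + 0)) _
        (0 * m + 0 + (0 * n + 0)) (8 * m ^ 2 + 0 * m + 0 + (8 * n ^ 2 + 0 * n + 0)) 0
        (by ring) (by ring),
      NF_congr τ (4 * (m + n) + 0 + (4 * (m - n) + 0)) _
        (0 * m + 0 + (0 * n + 0)) (8 * m ^ 2 + 0 * m + 0 + (8 * n ^ 2 + 0 * n + 0)) m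
        (by ring) (by ring)]
    ring
  have hD : ∑' p : ℤ × ℤ, F (Emap p) = 2 * (TT τ 0 0 8 0 0 * TT τ 0 0 8 0 0) := by
    rw [tsum_congr hC, tsum_mul_left, ← tsum_mul_tsum_of_summable_norm han han]
    simp only [TT, ha]
  rw [← hA, ← hB, hD]

lemma P3 (τ : ℂ) (hτ : 0 < τ.im) :
    TT τ 0 0 4 0 0 * TT τ 0 0 4 0 0 - TT τ 4 0 4 0 0 * TT τ 4 0 4 0 0 =
      2 * (TT τ 0 0 8 8 2 * TT τ 0 0 8 8 2) := by
  have hfn := NF_norm_summable τ hτ 0 0 4 0 0 (by norm_num)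
  have hgn := NF_norm_summable τ hτ 4 0 4 0 0 (by norm_num)
  have hcn := NF_norm_summable τ hτ 0 0 8 8 2 (by norm_num)
  set f : ℤ → ℂ := fun k => NF τ (0 * k + 0) (4 * k ^ 2 + 0 * k + 0) with hf
  set g : ℤ → ℂ := fun k => NF τ (4 * k + 0) (4 * k ^ 2 + 0 * k + 0) with hg
  set c : ℤ → ℂ := fun k => NF τ (0 * k + 0) (8 * k ^ 2 + 8 * k + 2) with hc
  set F : ℤ × ℤ → ℂ := fun p => f p.1 * f p.2 - g p.1 * g p.2 with hF
  have hs1 : Summable fun p : ℤ × ℤ => f p.1 * f p.2 := summable_mul_of_summable_norm hfn hfn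
  have hs2 : Summable fun p : ℤ × ℤ => g p.1 * g p.2 := summable_mul_of_summable_norm hgn hgn
  have hA : ∑' p : ℤ × ℤ, F p =
      TT τ 0 0 4 0 0 * TT τ 0 0 4 0 0 - TT τ 4 0 4 0 0 * TT τ 4 0 4 0 0 := by
    rw [hF, Summable.tsum_sub hs1 hs2, ← tsum_mul_tsum_of_summable_norm hfn hfn,
      ← tsum_mul_tsum_of_summable_norm hgn hgn]
    simp only [TT, hf, hg]
  have hB : ∑' p : ℤ × ℤ, F (Emap' p) = ∑' p : ℤ × ℤ, F p := by
    apply Emap'_inj.tsum_eq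
    intro p hp
    rcases p with ⟨j, l⟩
    by_contra hr
    apply hp
    have hev : ¬ Odd (j + l) := by
      intro h
      exact hr (Emap'_range h)
    rw [Int.not_odd_iff_even] at hev
    obtain ⟨t, ht⟩ := hev
    show f j * f l - g j * g l = 0
    rw [hf, hg]
    simp only []
    rw [NF_mul, NF_mul, sub_eq_zero]
    exact NF_congr τ _ _ _ _ (-t) (by omega) (by ring)
  have hC : ∀ p : ℤ × ℤ, F (Emap' p) = 2 * (c p.1 * c p.2) := by
    rintro ⟨m, n⟩
    show f (m + n + 1) * f (m - n) - g (m + n + 1) * g (m - n) = 2 * (c m * c n)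
    rw [hf, hg, hc]
    simp only []
    rw [NF_mul, NF_mul, NF_mul]
    rw [NF_congr τ (0 * (m + n + 1) + 0 + (0 * (m - n) + 0)) _
        (0 * m + 0 + (0 * n + 0)) (8 * m ^ 2 + 8 * m + 2 + (8 * n ^ 2 + 8 * n + 2)) 0
        (by ring) (by ring),
      NF_congr τ (4 * (m + n + 1) + 0 + (4 * (m - n) + 0)) _
        (0 * m + 0 + (0 * n + 0) + 4) (8 * m ^ 2 + 8 * m + 2 + (8 * n ^ 2 + 8 * n + 2)) m
        (by ring) (by ring),
      NF_neg]
    ring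
  have hD : ∑' p : ℤ × ℤ, F (Emap' p) = 2 * (TT τ 0 0 8 8 2 * TT τ 0 0 8 8 2) := by
    rw [tsum_congr hC, tsum_mul_left, ← tsum_mul_tsum_of_summable_norm hcn hcn]
    simp only [TT, hc]
  rw [← hA, ← hB, hD]

set_option maxHeartbeats 1000000 in
lemma P4 (τ : ℂ) (hτ : 0 < τ.im) :
    TT τ 2 0 4 0 0 * TT τ 2 0 4 0 0 = TT τ 4 0 8 0 0 * TT τ 0 0 8 0 0 := by
  have hfn := NF_norm_summable τ hτ 2 0 4 0 0 (by norm_num)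
  have hbn := NF_norm_summable τ hτ 4 0 8 0 0 (by norm_num)
  have han := NF_norm_summable τ hτ 0 0 8 0 0 (by norm_num)
  set f : ℤ → ℂ := fun k => NF τ (2 * k + 0) (4 * k ^ 2 + 0 * k + 0) with hf
  set F : ℤ × ℤ → ℂ := fun p => f p.1 * f p.2 + f (-p.1) * f (-p.2) with hF
  have hs1 : Summable fun p : ℤ × ℤ => f p.1 * f p.2 := summable_mul_of_summable_norm hfn hfn
  have hs2 : Summable fun p : ℤ × ℤ => f (-p.1) * f (-p.2) :=
    ((Equiv.prodCongr (Equiv.neg ℤ) (Equiv.neg ℤ)).summable_iff.mpr hs1)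
  have hA : ∑' p : ℤ × ℤ, F p = 2 * (TT τ 2 0 4 0 0 * TT τ 2 0 4 0 0) := by
    rw [hF, Summable.tsum_add hs1 hs2]
    have e1 : ∑' p : ℤ × ℤ, f (-p.1) * f (-p.2) = ∑' p : ℤ × ℤ, f p.1 * f p.2 :=
      (Equiv.prodCongr (Equiv.neg ℤ) (Equiv.neg ℤ)).tsum_eq (fun p : ℤ × ℤ => f p.1 * f p.2)
    rw [e1, ← tsum_mul_tsum_of_summable_norm hfn hfn]
    simp only [TT, hf]
    ring
  have hB : ∑' p : ℤ × ℤ, F (Emap p) = ∑' p : ℤ × ℤ, F p := by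
    apply Emap_inj.tsum_eq
    intro p hp
    rcases p with ⟨j, l⟩
    by_contra hr
    apply hp
    have hodd : Odd (j + l) := by
      by_contra h
      exact hr (Emap_range h)
    obtain ⟨t, ht⟩ := hodd
    show f j * f l + f (-j) * f (-l) = 0
    rw [hf]
    simp only []
    rw [NF_mul, NF_mul]
    exact NF_cancel τ _ _ _ _ t (by omega) (by ring)
  have hC : ∀ p : ℤ × ℤ,
      F (Emap p) = 2 * (NF τ (4 * p.1 + 0) (8 * p.1 ^ 2 + 0 * p.1 + 0) *
        NF τ (0 * p.2 + 0) (8 * p.2 ^ 2 + 0 * p.2 + 0)) := by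
    rintro ⟨m, n⟩
    show f (m + n) * f (m - n) + f (-(m + n)) * f (-(m - n)) = _
    rw [hf]
    simp only []
    rw [NF_mul, NF_mul, NF_mul]
    rw [NF_congr τ (2 * (m + n) + 0 + (2 * (m - n) + 0)) _
        (4 * m + 0 + (0 * n + 0)) (8 * m ^ 2 + 0 * m + 0 + (8 * n ^ 2 + 0 * n + 0)) 0
        (by ring) (by ring),
      NF_congr τ (2 * -(m + n) + 0 + (2 * -(m - n) + 0)) _
        (4 * m + 0 + (0 * n + 0)) (8 * m ^ 2 + 0 * m + 0 + (8 * n ^ 2 + 0 * n + 0)) (-m)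
        (by ring) (by ring)]
    ring
  have hD : ∑' p : ℤ × ℤ, F (Emap p) = 2 * (TT τ 4 0 8 0 0 * TT τ 0 0 8 0 0) := by
    rw [tsum_congr hC, tsum_mul_left, ← tsum_mul_tsum_of_summable_norm hbn han]
    simp only [TT]
  have h2 := hD.symm.trans (hB.trans hA)
  exact (mul_left_cancel₀ two_ne_zero h2).symm

set_option maxHeartbeats 1000000 in
lemma P5 (τ : ℂ) (hτ : 0 < τ.im) :
    TT τ 6 7 4 4 1 * TT τ 6 7 4 4 1 = TT τ 4 4 8 16 8 * TT τ 0 0 8 8 2 := by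
  have hfn := NF_norm_summable τ hτ 6 7 4 4 1 (by norm_num)
  have hbn := NF_norm_summable τ hτ 4 4 8 16 8 (by norm_num)
  have hcn := NF_norm_summable τ hτ 0 0 8 8 2 (by norm_num)
  set f : ℤ → ℂ := fun k => NF τ (6 * k + 7) (4 * k ^ 2 + 4 * k + 1) with hf
  set F : ℤ × ℤ → ℂ := fun p => f p.1 * f p.2 + f (-1 - p.1) * f (-1 - p.2) with hF
  have hs1 : Summable fun p : ℤ × ℤ => f p.1 * f p.2 := summable_mul_of_summable_norm hfn hfn
  have hs2 : Summable fun p : ℤ × ℤ => f (-1 - p.1) * f (-1 - p.2) :=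
    ((Equiv.prodCongr (Equiv.subLeft (-1 : ℤ)) (Equiv.subLeft (-1 : ℤ))).summable_iff.mpr hs1)
  have hA : ∑' p : ℤ × ℤ, F p = 2 * (TT τ 6 7 4 4 1 * TT τ 6 7 4 4 1) := by
    rw [hF, Summable.tsum_add hs1 hs2]
    have e1 : ∑' p : ℤ × ℤ, f (-1 - p.1) * f (-1 - p.2) = ∑' p : ℤ × ℤ, f p.1 * f p.2 :=
      (Equiv.prodCongr (Equiv.subLeft (-1 : ℤ)) (Equiv.subLeft (-1 : ℤ))).tsum_eq
        (fun p : ℤ × ℤ => f p.1 * f p.2)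
    rw [e1, ← tsum_mul_tsum_of_summable_norm hfn hfn]
    simp only [TT, hf]
    ring
  have hB : ∑' p : ℤ × ℤ, F (Emap' p) = ∑' p : ℤ × ℤ, F p := by
    apply Emap'_inj.tsum_eq
    intro p hp
    rcases p with ⟨j, l⟩
    by_contra hr
    apply hp
    have hev : ¬ Odd (j + l) := fun h => hr (Emap'_range h)
    rw [Int.not_odd_iff_even] at hev
    obtain ⟨t, ht⟩ := hev
    show f j * f l + f (-1 - j) * f (-1 - l) = 0
    rw [hf]
    simp only []
    rw [NF_mul, NF_mul]
    exact NF_cancel τ _ _ _ _ (3 * t + 1) (by omega) (by ring)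
  have hC : ∀ p : ℤ × ℤ,
      F (Emap' p) = 2 * (NF τ (4 * p.1 + 4) (8 * p.1 ^ 2 + 16 * p.1 + 8) *
        NF τ (0 * p.2 + 0) (8 * p.2 ^ 2 + 8 * p.2 + 2)) := by
    rintro ⟨m, n⟩
    show f (m + n + 1) * f (m - n) + f (-1 - (m + n + 1)) * f (-1 - (m - n)) = _
    rw [hf]
    simp only []
    rw [NF_mul, NF_mul, NF_mul]
    rw [NF_congr τ (6 * (m + n + 1) + 7 + (6 * (m - n) + 7)) _
        (4 * m + 4 + (0 * n + 0)) (8 * m ^ 2 + 16 * m + 8 + (8 * n ^ 2 + 8 * n + 2)) (m + 2)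
        (by ring) (by ring),
      NF_congr τ (6 * (-1 - (m + n + 1)) + 7 + (6 * (-1 - (m - n)) + 7)) _
        (4 * m + 4 + (0 * n + 0)) (8 * m ^ 2 + 16 * m + 8 + (8 * n ^ 2 + 8 * n + 2)) (-2 * m - 1)
        (by ring) (by ring)]
    ring
  have hD : ∑' p : ℤ × ℤ, F (Emap' p) = 2 * (TT τ 4 4 8 16 8 * TT τ 0 0 8 8 2) := by
    rw [tsum_congr hC, tsum_mul_left, ← tsum_mul_tsum_of_summable_norm hbn hcn]
    simp only [TT]
  have h2 := hD.symm.trans (hB.trans hA)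
  exact (mul_left_cancel₀ two_ne_zero h2).symm

lemma L1 (τ : ℂ) : TT τ 2 0 4 0 0 = TT τ 6 0 4 0 0 := by
  simp only [TT]
  rw [← (Equiv.neg ℤ).tsum_eq (fun k : ℤ => NF τ (6 * k + 0) (4 * k ^ 2 + 0 * k + 0))]
  refine tsum_congr fun k => ?_
  show NF τ (2 * k + 0) (4 * k ^ 2 + 0 * k + 0) = NF τ (6 * (-k) + 0) (4 * (-k) ^ 2 + 0 * (-k) + 0)
  exact NF_congr τ _ _ _ _ k (by ring) (by ring)

lemma L2 (τ : ℂ) : TT τ 2 1 4 4 1 = TT τ 6 7 4 4 1 := by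
  simp only [TT]
  rw [← (Equiv.subLeft (-1 : ℤ)).tsum_eq (fun k : ℤ => NF τ (6 * k + 7) (4 * k ^ 2 + 4 * k + 1))]
  refine tsum_congr fun k => ?_
  show NF τ (2 * k + 1) (4 * k ^ 2 + 4 * k + 1) =
    NF τ (6 * (-1 - k) + 7) (4 * (-1 - k) ^ 2 + 4 * (-1 - k) + 1)
  exact NF_congr τ _ _ _ _ k (by ring) (by ring)

lemma L3 (τ : ℂ) : TT τ 4 4 8 16 8 = TT τ 4 0 8 0 0 := by
  simp only [TT]
  rw [← (Equiv.subRight (1 : ℤ)).tsum_eq (fun k : ℤ => NF τ (4 * k + 4) (8 * k ^ 2 + 16 * k + 8))]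
  refine tsum_congr fun k => ?_
  simp only [Equiv.subRight_apply]
  exact NF_congr τ _ _ _ _ 0 (by ring) (by ring)

lemma negpow (k : ℤ) : ((-1 : ℂ)) ^ k = Complex.exp ((k : ℂ) * ((π : ℂ) * I)) := by
  rw [Complex.exp_int_mul, Complex.exp_pi_mul_I]

lemma negI_eq : (-I : ℂ) = Complex.exp ((π : ℂ) * I + (π : ℂ) / 2 * I) := by
  have h2 : Complex.exp ((π : ℂ) / 2 * I) = I := by
    rw [Complex.exp_mul_I]
    norm_cast
    rw [Real.cos_pi_div_two, Real.sin_pi_div_two]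
    push_cast
    ring
  rw [Complex.exp_add, Complex.exp_pi_mul_I, h2]
  ring

lemma C3a (τ : ℂ) : theta3 0 τ = TT τ 0 0 4 0 0 := by
  simp only [theta3, TT, NF, Zq_zpow, Qq_zpow]
  refine tsum_congr fun k => ?_
  simp only [← Complex.exp_add]
  congr 1
  push_cast
  ring

lemma C4a (τ : ℂ) : theta4 0 τ = TT τ 4 0 4 0 0 := by
  simp only [theta4, TT, NF, Zq_zpow, Qq_zpow]
  refine tsum_congr fun k => ?_
  rw [negpow]
  simp only [← Complex.exp_add]
  congr 1
  push_cast
  ring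

lemma C3q (τ : ℂ) : theta3 (1 / 4) τ = TT τ 2 0 4 0 0 := by
  simp only [theta3, TT, NF, Zq_zpow, Qq_zpow]
  refine tsum_congr fun k => ?_
  simp only [← Complex.exp_add]
  congr 1
  push_cast
  ring

lemma C4q (τ : ℂ) : theta4 (1 / 4) τ = TT τ 6 0 4 0 0 := by
  simp only [theta4, TT, NF, Zq_zpow, Qq_zpow]
  refine tsum_congr fun k => ?_
  rw [negpow]
  simp only [← Complex.exp_add]
  congr 1
  push_cast
  ring

lemma C2q (τ : ℂ) : theta2 (1 / 4) τ = TT τ 2 1 4 4 1 := by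
  simp only [theta2, TT, NF, Zq_zpow, Qq_zpow]
  refine tsum_congr fun k => ?_
  simp only [← Complex.exp_add]
  congr 1
  push_cast
  ring

lemma C1q (τ : ℂ) : theta1 (1 / 4) τ = TT τ 6 7 4 4 1 := by
  rw [theta1, ← tsum_mul_left]
  simp only [TT, NF, Zq_zpow, Qq_zpow]
  refine tsum_congr fun k => ?_
  rw [negpow, negI_eq, Complex.exp_add]
  simp only [← Complex.exp_add]
  congr 1
  push_cast
  ring

/-- Quarter-period theta values: `θ₄(1/4|τ) = θ₃(1/4|τ)`, `θ₂(1/4|τ) = θ₁(1/4|τ)`,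
`2θ₃(1/4|τ)⁴ = θ₄(0|τ)θ₃(0|τ)³ + θ₃(0|τ)θ₄(0|τ)³` and
`2θ₁(1/4|τ)⁴ = θ₄(0|τ)θ₃(0|τ)³ − θ₃(0|τ)θ₄(0|τ)³`. -/
theorem quarter_period_theta (τ : ℂ) (hτ : 0 < τ.im) :
    theta4 (1 / 4) τ = theta3 (1 / 4) τ ∧
      theta2 (1 / 4) τ = theta1 (1 / 4) τ ∧
      2 * theta3 (1 / 4) τ ^ 4 = theta4 0 τ * theta3 0 τ ^ 3 + theta3 0 τ * theta4 0 τ ^ 3 ∧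
      2 * theta1 (1 / 4) τ ^ 4 = theta4 0 τ * theta3 0 τ ^ 3 - theta3 0 τ * theta4 0 τ ^ 3 := by
  have p1 := P1 τ hτ
  have p2 := P2 τ hτ
  have p3 := P3 τ hτ
  have p4 := P4 τ hτ
  have p5 : TT τ 6 7 4 4 1 * TT τ 6 7 4 4 1 = TT τ 4 0 8 0 0 * TT τ 0 0 8 8 2 := by
    rw [P5 τ hτ, L3]
  refine ⟨?_, ?_, ?_, ?_⟩
  · rw [C4q, C3q, L1]
  · rw [C2q, L2, C1q]
  · rw [C3q, C3a, C4a]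
    linear_combination
      (2 * (TT τ 2 0 4 0 0 * TT τ 2 0 4 0 0) + 2 * (TT τ 4 0 8 0 0 * TT τ 0 0 8 0 0)) * p4 -
        (TT τ 0 0 4 0 0 * TT τ 0 0 4 0 0 + TT τ 4 0 4 0 0 * TT τ 4 0 4 0 0) * p1 -
        (TT τ 4 0 8 0 0 * TT τ 4 0 8 0 0) * p2
  · rw [C1q, C3a, C4a]
    linear_combination
      (2 * (TT τ 6 7 4 4 1 * TT τ 6 7 4 4 1) + 2 * (TT τ 4 0 8 0 0 * TT τ 0 0 8 8 2)) * p5 -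
        (TT τ 0 0 4 0 0 * TT τ 0 0 4 0 0 - TT τ 4 0 4 0 0 * TT τ 4 0 4 0 0) * p1 -
        (TT τ 4 0 8 0 0 * TT τ 4 0 8 0 0) * p3
end
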